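/- arXiv:1404.3455 — 2 statements merged into one kernel-verified Lean document; each statement's English description precedes it below -/
import Mathlib

section
/- Birational promotion cyclically shifts the quotient sequence: for P = [a]×[b] with n = a+b and every f : P → ℝ>0, Q(π_B f) is the leftward cyclic shift of Q(f), i.e. if Q(f) = (q_1, q_2, …, q_n) then Q(π_B f) = (q_2, …, q_n, q_1). -/
open scoped Classical

noncomputable section

instance {α : Type*} [Fintype α] : Fintype (WithTop α) := inferInstanceAs (Fintype (Option α))
instance {α : Type*} [Fintype α] : Fintype (WithBot α) := inferInstanceAs (Fintype (Option α))

variable {P : Type*} [Fintype P] [PartialOrder P]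

/-- The embedding of `P` into `P̂ = WithBot (WithTop P)`, the poset obtained from `P` by
adjoining a new minimum `⊥` and a new maximum `⊤`. -/
def emb (x : P) : WithBot (WithTop P) := ((x : WithTop P) : WithBot (WithTop P))

/-- Extend `f : P → ℝ` to `P̂` with value `v0` at the new minimum and `v1` at the new maximum. -/
def extendHat (v0 v1 : ℝ) (f : P → ℝ) : WithBot (WithTop P) → ℝ :=
  WithBot.recBotCoe v0 (WithTop.recTopCoe v1 f)

/-- `L`: the maximum of the (extended, with `f(0̂) = 0`) values at elements of `P̂` covered by `x`. -/
def plL (f : P → ℝ) (x : P) : ℝ := sSup (extendHat 0 1 f '' {y | y ⋖ emb x})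

/-- `R`: the minimum of the (extended, with `f(1̂) = 1`) values at elements of `P̂` covering `x`. -/
def plR (f : P → ℝ) (x : P) : ℝ := sInf (extendHat 0 1 f '' {y | emb x ⋖ y})

/-- The piecewise-linear toggle at `x`. -/
def plToggle (x : P) (f : P → ℝ) : P → ℝ :=
  Function.update f x (plL f x + plR f x - f x)

/-- `xs` is a linear extension of `P`: an enumeration of all elements such that
`x_i < x_j` in `P` implies `i < j`. -/
def IsLinearExt (xs : List P) : Prop :=
  xs.Nodup ∧ (∀ x : P, x ∈ xs) ∧ xs.Pairwise fun u v => ¬ v < u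

/-- Piecewise-linear rowmotion along the linear extension `xs = [x₁, …, x_p]`:
the composite `τ_{x₁} ∘ ⋯ ∘ τ_{x_p}` (toggling from top to bottom). -/
def plRow (xs : List P) (f : P → ℝ) : P → ℝ := xs.foldr plToggle f

/-- Membership in the order polytope `O(P)`. -/
def InOrderPolytope (f : P → ℝ) : Prop :=
  Monotone f ∧ ∀ x, 0 ≤ f x ∧ f x ≤ 1

/-- `L`: the sum of the (extended, with `f(0̂) = 1`) values at elements of `P̂` covered by `x`. -/
def bL (f : P → ℝ) (x : P) : ℝ :=
  ∑ y : WithBot (WithTop P), if y ⋖ emb x then extendHat 1 1 f y else 0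

/-- `R`: the parallel sum of the (extended, with `f(1̂) = 1`) values at elements of `P̂`
covering `x`. -/
def bR (f : P → ℝ) (x : P) : ℝ :=
  (∑ y : WithBot (WithTop P), if emb x ⋖ y then (extendHat 1 1 f y)⁻¹ else 0)⁻¹

/-- The birational toggle at `x`. -/
def bToggle (x : P) (f : P → ℝ) : P → ℝ :=
  Function.update f x (bL f x * bR f x / f x)

/-- Birational rowmotion along the linear extension `xs = [x₁, …, x_p]`:
the composite `τ_{x₁} ∘ ⋯ ∘ τ_{x_p}` (toggling from top to bottom). -/
def bRow (xs : List P) (f : P → ℝ) : P → ℝ := xs.foldr bToggle f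

/-- The `k`-th file of `[a] × [b]` (in `Fin a × Fin b` coordinates, where `(i,j) : Fin a × Fin b`
corresponds to `(i+1, j+1) ∈ [a] × [b]`): the condition `j - i = k - a` (1-based). -/
def InFile (a b k : ℕ) (x : Fin a × Fin b) : Prop :=
  ((x.2 : ℤ) - (x.1 : ℤ) = (k : ℤ) - (a : ℤ))

/-- The piecewise-linear file-toggle `τ_k^*`: simultaneously toggle all elements of the `k`-th
file (these toggles commute, and none reads another's value, so this is their composition). -/
def plFileToggle (a b : ℕ) (k : ℕ) (f : Fin a × Fin b → ℝ) : Fin a × Fin b → ℝ :=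
  fun x => if InFile a b k x then plL f x + plR f x - f x else f x

/-- Piecewise-linear promotion `π_P = τ_{n-1}^* ∘ ⋯ ∘ τ_1^*` (file 1 toggled first). -/
def plPromo (a b : ℕ) (f : Fin a × Fin b → ℝ) : Fin a × Fin b → ℝ :=
  (List.range (a + b - 1)).foldl (fun g k => plFileToggle a b (k + 1) g) f

/-- The birational file-toggle `τ_k^*`. -/
def bFileToggle (a b k : ℕ) (f : Fin a × Fin b → ℝ) : Fin a × Fin b → ℝ :=
  fun x => if InFile a b k x then bL f x * bR f x / f x else f x

/-- Birational promotion `π_B = τ_{n-1}^* ∘ ⋯ ∘ τ_1^*` (file 1 toggled first). -/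
def bPromo (a b : ℕ) (f : Fin a × Fin b → ℝ) : Fin a × Fin b → ℝ :=
  (List.range (a + b - 1)).foldl (fun g k => bFileToggle a b (k + 1) g) f

/-- The antipode map `(i, j) ↦ (a + 1 - i, b + 1 - j)` (in 1-based coordinates). -/
def antipode {a b : ℕ} (x : Fin a × Fin b) : Fin a × Fin b := (x.1.rev, x.2.rev)

/-- `p_k`: the product of the values of `f` over the `k`-th file (equal to `1` for `k = 0`
and `k = a + b`, since those files are empty). -/
def fileProd (a b : ℕ) (f : Fin a × Fin b → ℝ) (k : ℕ) : ℝ :=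
  ∏ x : Fin a × Fin b, if InFile a b k x then f x else 1

/-- The quotient sequence `Q(f) = (q_1, …, q_n)`, `q_k = p_k / p_{k-1}`. -/
def quotSeq (a b : ℕ) (f : Fin a × Fin b → ℝ) (k : ℕ) : ℝ :=
  fileProd a b f k / fileProd a b f (k - 1)

section Aux
set_option linter.unusedSectionVars false

variable {Q : Type*} [Fintype Q] [PartialOrder Q]

lemma extendHat_bot (v0 v1 : ℝ) (h : Q → ℝ) :
    extendHat v0 v1 h (⊥ : WithBot (WithTop Q)) = v0 := rfl

lemma extendHat_emb (v0 v1 : ℝ) (h : Q → ℝ) (x : Q) :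
    extendHat v0 v1 h (emb x) = h x := rfl

lemma extendHat_topc (v0 v1 : ℝ) (h : Q → ℝ) :
    extendHat v0 v1 h (((⊤ : WithTop Q) : WithBot (WithTop Q))) = v1 := rfl

lemma emb_inj {p q : Q} : emb p = emb q ↔ p = q := by
  simp [emb]

lemma isMin_coe_iff {x : Q} : IsMin (x : WithTop Q) ↔ IsMin x := by
  constructor
  · intro h c hc
    exact WithTop.coe_le_coe.1 (h (WithTop.coe_le_coe.2 hc))
  · intro h c hc
    induction c using WithTop.recTopCoe with
    | top => exact absurd hc (by simp)
    | coe p => exact WithTop.coe_le_coe.2 (h (WithTop.coe_le_coe.1 hc))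

lemma covBy_emb_iff {x : Q} {y : WithBot (WithTop Q)} :
    y ⋖ emb x ↔ (y = ⊥ ∧ IsMin x) ∨ ∃ p : Q, y = emb p ∧ p ⋖ x := by
  induction y using WithBot.recBotCoe with
  | bot =>
    simp only [emb, WithBot.bot_covBy_coe, isMin_coe_iff]
    simp [emb]
  | coe z =>
    induction z using WithTop.recTopCoe with
    | top =>
      constructor
      · intro hc
        exact absurd (WithBot.coe_lt_coe.1 hc.lt) not_top_lt
      · rintro (⟨h, -⟩ | ⟨p, h, -⟩)
        · exact absurd h (by simp)
        · exact absurd h (by simp [emb])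
    | coe p =>
      simp only [emb, WithBot.coe_covBy_coe, WithTop.coe_covBy_coe]
      constructor
      · intro hc
        exact Or.inr ⟨p, rfl, hc⟩
      · rintro (⟨h, -⟩ | ⟨q, h, hc⟩)
        · exact absurd h (by simp)
        · obtain rfl : p = q := by
            simpa [emb] using h
          exact hc

lemma emb_covBy_iff {x : Q} {y : WithBot (WithTop Q)} :
    emb x ⋖ y ↔ (y = ((⊤ : WithTop Q) : WithBot (WithTop Q)) ∧ IsMax x)
      ∨ ∃ p : Q, y = emb p ∧ x ⋖ p := by
  induction y using WithBot.recBotCoe with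
  | bot =>
    constructor
    · intro hc
      exact absurd hc.lt (by simp)
    · rintro (⟨h, -⟩ | ⟨p, h, -⟩)
      · exact absurd h (by simp)
      · exact absurd h (by simp [emb])
  | coe z =>
    induction z using WithTop.recTopCoe with
    | top =>
      simp only [emb, WithBot.coe_covBy_coe, WithTop.coe_covBy_top]
      constructor
      · intro h
        refine Or.inl ⟨by trivial, h⟩
      · rintro (⟨-, h⟩ | ⟨p, h, -⟩)
        · exact h
        · exact absurd h (by simp [emb])
    | coe p =>
      simp only [emb, WithBot.coe_covBy_coe, WithTop.coe_covBy_coe]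
      constructor
      · intro hc
        exact Or.inr ⟨p, rfl, hc⟩
      · rintro (⟨h, -⟩ | ⟨q, h, hc⟩)
        · exact absurd h (by simp)
        · obtain rfl : p = q := by
            simpa [emb] using h
          exact hc

end Aux
section Aux2
set_option linter.unusedSectionVars false

variable {a b : ℕ}

/-- Coordinate constructor for `Fin a × Fin b` (total via `%`). -/
def XP (ha : 0 < a) (hb : 0 < b) (i j : ℕ) : Fin a × Fin b :=
  (⟨i % a, Nat.mod_lt _ ha⟩, ⟨j % b, Nat.mod_lt _ hb⟩)

lemma XP_fst (ha : 0 < a) (hb : 0 < b) (i j : ℕ) : ((XP ha hb i j).1 : ℕ) = i % a := rfl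
lemma XP_snd (ha : 0 < a) (hb : 0 < b) (i j : ℕ) : ((XP ha hb i j).2 : ℕ) = j % b := rfl

lemma XP_eq_iff (ha : 0 < a) (hb : 0 < b) {x : Fin a × Fin b} {i j : ℕ}
    (hi : i < a) (hj : j < b) :
    x = XP ha hb i j ↔ (x.1 : ℕ) = i ∧ (x.2 : ℕ) = j := by
  simp [XP, Prod.ext_iff, Fin.ext_iff, Nat.mod_eq_of_lt, hi, hj]

lemma XP_self (ha : 0 < a) (hb : 0 < b) (x : Fin a × Fin b) :
    XP ha hb (x.1 : ℕ) (x.2 : ℕ) = x :=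
  ((XP_eq_iff ha hb x.1.isLt x.2.isLt).2 ⟨rfl, rfl⟩).symm

lemma isMin_rect (ha : 0 < a) (hb : 0 < b) {x : Fin a × Fin b} :
    IsMin x ↔ (x.1 : ℕ) = 0 ∧ (x.2 : ℕ) = 0 := by
  constructor
  · intro h
    have := h (show ((⟨0, ha⟩, ⟨0, hb⟩) : Fin a × Fin b) ≤ x by
      simp [Prod.le_def, Fin.le_def])
    simp only [Prod.le_def, Fin.le_def] at this
    omega
  · intro h c hc
    simp only [Prod.le_def, Fin.le_def] at hc ⊢
    omega

lemma isMax_rect (ha : 0 < a) (hb : 0 < b) {x : Fin a × Fin b} :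
    IsMax x ↔ (x.1 : ℕ) = a - 1 ∧ (x.2 : ℕ) = b - 1 := by
  constructor
  · intro h
    have h1 : (x.1 : ℕ) < a := x.1.isLt
    have h2 : (x.2 : ℕ) < b := x.2.isLt
    have := h (show x ≤ ((⟨a - 1, by omega⟩, ⟨b - 1, by omega⟩) : Fin a × Fin b) by
      simp only [Prod.le_def, Fin.le_def, Fin.mk_le_mk] <;> constructor <;> omega)
    simp only [Prod.le_def, Fin.le_def] at this
    omega
  · intro h c hc
    have h1 : (c.1 : ℕ) < a := c.1.isLt
    have h2 : (c.2 : ℕ) < b := c.2.isLt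
    simp only [Prod.le_def, Fin.le_def] at hc ⊢
    omega

lemma covBy_rect {p x : Fin a × Fin b} :
    p ⋖ x ↔ ((p.1 : ℕ) + 1 = (x.1 : ℕ) ∧ p.2 = x.2) ∨
      (p.1 = x.1 ∧ (p.2 : ℕ) + 1 = (x.2 : ℕ)) := by
  have : p ⋖ x ↔ (p.1, p.2) ⋖ (x.1, x.2) := by rfl
  rw [this, Prod.mk_covBy_mk_iff]
  constructor
  · rintro (⟨h1, h2⟩ | ⟨h1, h2⟩)
    · exact Or.inl ⟨Nat.covBy_iff_add_one_eq.1 (Fin.coe_covBy_iff.2 h1), h2⟩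
    · exact Or.inr ⟨h2, Nat.covBy_iff_add_one_eq.1 (Fin.coe_covBy_iff.2 h1)⟩
  · rintro (⟨h1, h2⟩ | ⟨h1, h2⟩)
    · exact Or.inl ⟨Fin.coe_covBy_iff.1 (Nat.covBy_iff_add_one_eq.2 h1), h2⟩
    · exact Or.inr ⟨Fin.coe_covBy_iff.1 (Nat.covBy_iff_add_one_eq.2 h2), h1⟩

lemma covBy_emb_rect (ha : 0 < a) (hb : 0 < b) (x : Fin a × Fin b)
    (y : WithBot (WithTop (Fin a × Fin b))) :
    y ⋖ emb x ↔
      (((x.1 : ℕ) = 0 ∧ (x.2 : ℕ) = 0) ∧ y = ⊥)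
      ∨ (0 < (x.1 : ℕ) ∧ y = emb (XP ha hb ((x.1 : ℕ) - 1) (x.2 : ℕ)))
      ∨ (0 < (x.2 : ℕ) ∧ y = emb (XP ha hb (x.1 : ℕ) ((x.2 : ℕ) - 1))) := by
  have hx1 : (x.1 : ℕ) < a := x.1.isLt
  have hx2 : (x.2 : ℕ) < b := x.2.isLt
  rw [covBy_emb_iff]
  constructor
  · rintro (⟨rfl, hmin⟩ | ⟨p, rfl, hcov⟩)
    · exact Or.inl ⟨(isMin_rect ha hb).1 hmin, rfl⟩
    · rcases covBy_rect.1 hcov with ⟨h1, h2⟩ | ⟨h1, h2⟩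
      · refine Or.inr (Or.inl ⟨by omega, ?_⟩)
        rw [emb_inj, XP_eq_iff ha hb (by omega) hx2]
        constructor
        · omega
        · rw [h2]
      · refine Or.inr (Or.inr ⟨by omega, ?_⟩)
        rw [emb_inj, XP_eq_iff ha hb hx1 (by omega)]
        constructor
        · rw [h1]
        · omega
  · rintro (⟨hc, rfl⟩ | ⟨hc, rfl⟩ | ⟨hc, rfl⟩)
    · exact Or.inl ⟨rfl, (isMin_rect ha hb).2 hc⟩
    · refine Or.inr ⟨_, rfl, covBy_rect.2 (Or.inl ⟨?_, ?_⟩)⟩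
      · rw [XP_fst, Nat.mod_eq_of_lt (by omega)]; try omega
      · apply Fin.ext; rw [XP_snd]; exact (Nat.mod_eq_of_lt hx2).symm ▸ rfl
    · refine Or.inr ⟨_, rfl, covBy_rect.2 (Or.inr ⟨?_, ?_⟩)⟩
      · apply Fin.ext; rw [XP_fst]; exact (Nat.mod_eq_of_lt hx1).symm ▸ rfl
      · rw [XP_snd, Nat.mod_eq_of_lt (by omega)]; try omega

lemma emb_covBy_rect (ha : 0 < a) (hb : 0 < b) (x : Fin a × Fin b)
    (y : WithBot (WithTop (Fin a × Fin b))) :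
    emb x ⋖ y ↔
      (((x.1 : ℕ) = a - 1 ∧ (x.2 : ℕ) = b - 1) ∧
        y = ((⊤ : WithTop (Fin a × Fin b)) : WithBot (WithTop (Fin a × Fin b))))
      ∨ ((x.1 : ℕ) + 1 < a ∧ y = emb (XP ha hb ((x.1 : ℕ) + 1) (x.2 : ℕ)))
      ∨ ((x.2 : ℕ) + 1 < b ∧ y = emb (XP ha hb (x.1 : ℕ) ((x.2 : ℕ) + 1))) := by
  have hx1 : (x.1 : ℕ) < a := x.1.isLt
  have hx2 : (x.2 : ℕ) < b := x.2.isLt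
  rw [emb_covBy_iff]
  constructor
  · rintro (⟨rfl, hmax⟩ | ⟨p, rfl, hcov⟩)
    · exact Or.inl ⟨(isMax_rect ha hb).1 hmax, rfl⟩
    · have hp1 : (p.1 : ℕ) < a := p.1.isLt
      have hp2 : (p.2 : ℕ) < b := p.2.isLt
      rcases covBy_rect.1 hcov with ⟨h1, h2⟩ | ⟨h1, h2⟩
      · refine Or.inr (Or.inl ⟨by omega, ?_⟩)
        rw [emb_inj, XP_eq_iff ha hb (by omega) hx2]
        constructor
        · omega
        · rw [← h2]
      · refine Or.inr (Or.inr ⟨by omega, ?_⟩)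
        rw [emb_inj, XP_eq_iff ha hb hx1 (by omega)]
        constructor
        · rw [← h1]
        · omega
  · rintro (⟨hc, rfl⟩ | ⟨hc, rfl⟩ | ⟨hc, rfl⟩)
    · exact Or.inl ⟨rfl, (isMax_rect ha hb).2 hc⟩
    · refine Or.inr ⟨_, rfl, covBy_rect.2 (Or.inl ⟨?_, ?_⟩)⟩
      · rw [XP_fst, Nat.mod_eq_of_lt (by omega)]; try omega
      · apply Fin.ext; rw [XP_snd]; exact (Nat.mod_eq_of_lt hx2).symm ▸ rfl
    · refine Or.inr ⟨_, rfl, covBy_rect.2 (Or.inr ⟨?_, ?_⟩)⟩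
      · apply Fin.ext; rw [XP_fst]; exact (Nat.mod_eq_of_lt hx1).symm ▸ rfl
      · rw [XP_snd, Nat.mod_eq_of_lt (by omega)]; try omega

end Aux2
section Aux3
set_option linter.unusedSectionVars false
variable {a b : ℕ}

lemma sum3 {α : Type*} [Fintype α] (v : α → ℝ) (cond : α → Prop)
    (P1 P2 P3 : Prop) (c1 c2 c3 : α)
    (hiff : ∀ y, cond y ↔ (P1 ∧ y = c1) ∨ (P2 ∧ y = c2) ∨ (P3 ∧ y = c3))
    (h12 : P1 → P2 → c1 ≠ c2) (h13 : P1 → P3 → c1 ≠ c3) (h23 : P2 → P3 → c2 ≠ c3) :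
    (∑ y : α, if cond y then v y else 0)
      = (if P1 then v c1 else 0) + (if P2 then v c2 else 0) + (if P3 then v c3 else 0) := by
  classical
  have key : ∀ y : α, (if cond y then v y else 0)
      = (if P1 ∧ y = c1 then v y else 0) + (if P2 ∧ y = c2 then v y else 0)
        + (if P3 ∧ y = c3 then v y else 0) := by
    intro y
    rw [if_congr (hiff y) rfl rfl]
    by_cases h1 : P1 ∧ y = c1
    · have e2 : ¬(P2 ∧ y = c2) := fun hc => h12 h1.1 hc.1 (h1.2.symm.trans hc.2)
      have e3 : ¬(P3 ∧ y = c3) := fun hc => h13 h1.1 hc.1 (h1.2.symm.trans hc.2)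
      rw [if_pos (Or.inl h1), if_pos h1, if_neg e2, if_neg e3]; ring
    · by_cases h2 : P2 ∧ y = c2
      · have e3 : ¬(P3 ∧ y = c3) := fun hc => h23 h2.1 hc.1 (h2.2.symm.trans hc.2)
        rw [if_pos (Or.inr (Or.inl h2)), if_neg h1, if_pos h2, if_neg e3]; ring
      · by_cases h3 : P3 ∧ y = c3
        · rw [if_pos (Or.inr (Or.inr h3)), if_neg h1, if_neg h2, if_pos h3]; ring
        · rw [if_neg (by tauto), if_neg h1, if_neg h2, if_neg h3]; ring
  rw [Finset.sum_congr rfl (fun y _ => key y), Finset.sum_add_distrib, Finset.sum_add_distrib]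
  have single : ∀ (P : Prop) (_ : Decidable P) (c : α),
      (∑ y : α, if P ∧ y = c then v y else 0) = if P then v c else 0 := by
    intro P hP c
    by_cases hp : P
    · simp [hp]
    · simp [hp]
  rw [single, single, single]

lemma bL_X (ha : 0 < a) (hb : 0 < b) (h : Fin a × Fin b → ℝ) (x : Fin a × Fin b) :
    bL h x = (if (x.1 : ℕ) = 0 ∧ (x.2 : ℕ) = 0 then 1 else 0)
      + (if 0 < (x.1 : ℕ) then h (XP ha hb ((x.1 : ℕ) - 1) (x.2 : ℕ)) else 0)
      + (if 0 < (x.2 : ℕ) then h (XP ha hb (x.1 : ℕ) ((x.2 : ℕ) - 1)) else 0) := by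
  have hx1 : (x.1 : ℕ) < a := x.1.isLt
  have hx2 : (x.2 : ℕ) < b := x.2.isLt
  unfold bL
  rw [sum3 (extendHat 1 1 h) _ _ _ _ _ _ _ (covBy_emb_rect ha hb x)
    (fun _ _ => by simp [emb])
    (fun _ _ => by simp [emb])
    (fun h2 h3 heq => by
      have := congrArg (fun z => ((z.1 : ℕ))) (emb_inj.1 heq)
      simp only [XP_fst] at this
      rw [Nat.mod_eq_of_lt (by omega), Nat.mod_eq_of_lt (by omega)] at this
      omega)]
  simp only [extendHat_bot, extendHat_emb]
  split_ifs <;> rfl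

lemma bR_X (ha : 0 < a) (hb : 0 < b) (h : Fin a × Fin b → ℝ) (x : Fin a × Fin b) :
    bR h x = ((if (x.1 : ℕ) = a - 1 ∧ (x.2 : ℕ) = b - 1 then 1 else 0)
      + (if (x.1 : ℕ) + 1 < a then (h (XP ha hb ((x.1 : ℕ) + 1) (x.2 : ℕ)))⁻¹ else 0)
      + (if (x.2 : ℕ) + 1 < b then (h (XP ha hb (x.1 : ℕ) ((x.2 : ℕ) + 1)))⁻¹ else 0))⁻¹ := by
  have hx1 : (x.1 : ℕ) < a := x.1.isLt
  have hx2 : (x.2 : ℕ) < b := x.2.isLt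
  unfold bR
  rw [sum3 (fun y => (extendHat 1 1 h y)⁻¹) _ _ _ _ _ _ _ (emb_covBy_rect ha hb x)
    (fun _ _ => by simp [emb])
    (fun _ _ => by simp [emb])
    (fun h2 h3 heq => by
      have := congrArg (fun z => ((z.1 : ℕ))) (emb_inj.1 heq)
      simp only [XP_fst] at this
      rw [Nat.mod_eq_of_lt (by omega), Nat.mod_eq_of_lt (by omega)] at this
      omega)]
  simp only [extendHat_topc, extendHat_emb, inv_one]
  split_ifs <;> rfl

lemma bL_pos (ha : 0 < a) (hb : 0 < b) {h : Fin a × Fin b → ℝ} (hpos : ∀ x, 0 < h x)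
    (x : Fin a × Fin b) : 0 < bL h x := by
  rw [bL_X ha hb]
  have n1 : (0:ℝ) ≤ if (x.1 : ℕ) = 0 ∧ (x.2 : ℕ) = 0 then 1 else 0 := by positivity
  have n2 : (0:ℝ) ≤ if 0 < (x.1 : ℕ) then h (XP ha hb ((x.1 : ℕ) - 1) (x.2 : ℕ)) else 0 := by
    split_ifs; exacts [(hpos _).le, le_rfl]
  have n3 : (0:ℝ) ≤ if 0 < (x.2 : ℕ) then h (XP ha hb (x.1 : ℕ) ((x.2 : ℕ) - 1)) else 0 := by
    split_ifs; exacts [(hpos _).le, le_rfl]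
  rcases Nat.eq_zero_or_pos (x.1 : ℕ) with h1 | h1
  · rcases Nat.eq_zero_or_pos (x.2 : ℕ) with h2 | h2
    · rw [if_pos ⟨h1, h2⟩]; linarith
    · rw [if_pos h2] at n3 ⊢
      linarith [hpos (XP ha hb (x.1 : ℕ) ((x.2 : ℕ) - 1))]
  · rw [if_pos h1] at n2 ⊢
    linarith [hpos (XP ha hb ((x.1 : ℕ) - 1) (x.2 : ℕ))]

lemma bR_pos (ha : 0 < a) (hb : 0 < b) {h : Fin a × Fin b → ℝ} (hpos : ∀ x, 0 < h x)
    (x : Fin a × Fin b) : 0 < bR h x := by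
  rw [bR_X ha hb]
  have hx1 : (x.1 : ℕ) < a := x.1.isLt
  have hx2 : (x.2 : ℕ) < b := x.2.isLt
  apply inv_pos.2
  have n1 : (0:ℝ) ≤ if (x.1 : ℕ) = a - 1 ∧ (x.2 : ℕ) = b - 1 then 1 else 0 := by positivity
  have n2 : (0:ℝ) ≤ if (x.1 : ℕ) + 1 < a then (h (XP ha hb ((x.1 : ℕ) + 1) (x.2 : ℕ)))⁻¹ else 0 := by
    split_ifs; exacts [(inv_pos.2 (hpos _)).le, le_rfl]
  have n3 : (0:ℝ) ≤ if (x.2 : ℕ) + 1 < b then (h (XP ha hb (x.1 : ℕ) ((x.2 : ℕ) + 1)))⁻¹ else 0 := by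
    split_ifs; exacts [(inv_pos.2 (hpos _)).le, le_rfl]
  rcases Nat.lt_or_ge ((x.1 : ℕ) + 1) a with h1 | h1
  · rw [if_pos h1] at n2 ⊢
    linarith [inv_pos.2 (hpos (XP ha hb ((x.1 : ℕ) + 1) (x.2 : ℕ)))]
  · rcases Nat.lt_or_ge ((x.2 : ℕ) + 1) b with h2 | h2
    · rw [if_pos h2] at n3 ⊢
      linarith [inv_pos.2 (hpos (XP ha hb (x.1 : ℕ) ((x.2 : ℕ) + 1)))]
    · rw [if_pos ⟨by omega, by omega⟩]; linarith

end Aux3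
section Aux4
set_option linter.unusedSectionVars false
variable {a b : ℕ}

lemma InFile_unique {m k : ℕ} {x : Fin a × Fin b} (h1 : InFile a b m x)
    (h2 : InFile a b k x) : m = k := by
  unfold InFile at h1 h2; omega

lemma rep (ha : 0 < a) (hb : 0 < b) (F : Fin a × Fin b → ℝ) {m : ℕ} (hm : m ≤ a + b - 1) :
    (∏ x : Fin a × Fin b, if InFile a b m x then F x else 1)
      = ∏ i ∈ Finset.Icc (a - m) (min (a - 1) (a + b - 1 - m)), F (XP ha hb i (i + m - a)) := by
  classical
  rw [← Finset.prod_filter]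
  apply Finset.prod_nbij' (fun x => (x.1 : ℕ)) (fun i => XP ha hb i (i + m - a))
  · intro x hx
    rw [Finset.mem_filter] at hx
    have h1 : (x.1 : ℕ) < a := x.1.isLt
    have h2 : (x.2 : ℕ) < b := x.2.isLt
    have := hx.2
    unfold InFile at this
    rw [Finset.mem_Icc]
    omega
  · intro i hi
    rw [Finset.mem_Icc] at hi
    rw [Finset.mem_filter]
    refine ⟨Finset.mem_univ _, ?_⟩
    unfold InFile
    rw [XP_fst, XP_snd, Nat.mod_eq_of_lt (by omega), Nat.mod_eq_of_lt (by omega)]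
    omega
  · intro x hx
    rw [Finset.mem_filter] at hx
    have h1 : (x.1 : ℕ) < a := x.1.isLt
    have h2 : (x.2 : ℕ) < b := x.2.isLt
    have := hx.2
    unfold InFile at this
    exact ((XP_eq_iff ha hb h1 (by omega)).2 ⟨rfl, by omega⟩).symm
  · intro i hi
    rw [Finset.mem_Icc] at hi
    rw [XP_fst, Nat.mod_eq_of_lt (by omega)]
  · intro x hx
    rw [Finset.mem_filter] at hx
    have h1 : (x.1 : ℕ) < a := x.1.isLt
    have h2 : (x.2 : ℕ) < b := x.2.isLt
    have := hx.2
    unfold InFile at this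
    exact congrArg F ((XP_eq_iff ha hb h1 (by omega)).2 ⟨rfl, by omega⟩)

lemma fileProd_rep (ha : 0 < a) (hb : 0 < b) (F : Fin a × Fin b → ℝ) {m : ℕ}
    (hm : m ≤ a + b - 1) :
    fileProd a b F m
      = ∏ i ∈ Finset.Icc (a - m) (min (a - 1) (a + b - 1 - m)), F (XP ha hb i (i + m - a)) :=
  rep ha hb F hm

lemma fileProd_zero (F : Fin a × Fin b → ℝ) : fileProd a b F 0 = 1 := by
  unfold fileProd
  apply Finset.prod_eq_one
  intro x _
  rw [if_neg]
  unfold InFile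
  have h1 : (x.1 : ℕ) < a := x.1.isLt
  omega

lemma fileProd_n (F : Fin a × Fin b → ℝ) : fileProd a b F (a + b) = 1 := by
  unfold fileProd
  apply Finset.prod_eq_one
  intro x _
  rw [if_neg]
  unfold InFile
  have h2 : (x.2 : ℕ) < b := x.2.isLt
  omega

lemma fileProd_pos {F : Fin a × Fin b → ℝ} (hpos : ∀ x, 0 < F x) (m : ℕ) :
    0 < fileProd a b F m := by
  unfold fileProd
  apply Finset.prod_pos
  intro x _
  split_ifs
  · exact hpos x
  · exact one_pos

lemma fileProd_toggle_ne {m k : ℕ} (hmk : m ≠ k) (h : Fin a × Fin b → ℝ) :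
    fileProd a b (bFileToggle a b k h) m = fileProd a b h m := by
  unfold fileProd
  apply Finset.prod_congr rfl
  intro x _
  by_cases hx : InFile a b m x
  · rw [if_pos hx, if_pos hx]
    show (if InFile a b k x then _ else h x) = h x
    rw [if_neg (fun hc => hmk (InFile_unique hx hc))]
  · rw [if_neg hx, if_neg hx]

lemma toggle_pos (ha : 0 < a) (hb : 0 < b) {k : ℕ} {h : Fin a × Fin b → ℝ}
    (hpos : ∀ x, 0 < h x) : ∀ x, 0 < bFileToggle a b k h x := by
  intro x
  show 0 < if InFile a b k x then bL h x * bR h x / h x else h x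
  split_ifs
  · exact div_pos (mul_pos (bL_pos ha hb hpos x) (bR_pos ha hb hpos x)) (hpos x)
  · exact hpos x

end Aux4
section Aux5
set_option linter.unusedSectionVars false
variable {a b : ℕ}

lemma XP_congr (ha : 0 < a) (hb : 0 < b) {i1 i2 j1 j2 : ℕ} (hi : i1 = i2) (hj : j1 = j2) :
    XP ha hb i1 j1 = XP ha hb i2 j2 := by rw [hi, hj]

lemma bL_XP (ha : 0 < a) (hb : 0 < b) (h : Fin a × Fin b → ℝ) {i j : ℕ}
    (hi : i < a) (hj : j < b) :
    bL h (XP ha hb i j) = (if i = 0 ∧ j = 0 then 1 else 0)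
      + (if 0 < i then h (XP ha hb (i - 1) j) else 0)
      + (if 0 < j then h (XP ha hb i (j - 1)) else 0) := by
  rw [bL_X ha hb, XP_fst, XP_snd, Nat.mod_eq_of_lt hi, Nat.mod_eq_of_lt hj]

lemma bR_XP (ha : 0 < a) (hb : 0 < b) (h : Fin a × Fin b → ℝ) {i j : ℕ}
    (hi : i < a) (hj : j < b) :
    bR h (XP ha hb i j) = ((if i = a - 1 ∧ j = b - 1 then 1 else 0)
      + (if i + 1 < a then (h (XP ha hb (i + 1) j))⁻¹ else 0)
      + (if j + 1 < b then (h (XP ha hb i (j + 1)))⁻¹ else 0))⁻¹ := by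
  rw [bR_X ha hb, XP_fst, XP_snd, Nat.mod_eq_of_lt hi, Nat.mod_eq_of_lt hj]

lemma hIcoIcc (lo hi : ℕ) : Finset.Ico lo (hi + 1) = Finset.Icc lo hi := by
  ext i; simp [Finset.mem_Ico, Finset.mem_Icc]

lemma hIccIoc (lo hi : ℕ) : Finset.Icc (lo + 1) hi = Finset.Ioc lo hi := by
  ext i; simp [Finset.mem_Icc, Finset.mem_Ioc]

lemma himg (lo hi : ℕ) : (Finset.Ico lo hi).image (· + 1) = Finset.Ioc lo hi := by
  rw [Finset.image_add_right_Ico]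
  ext i; simp [Finset.mem_Ico, Finset.mem_Ioc]

lemma master (ha : 0 < a) (hb : 0 < b) {k : ℕ} (hk1 : 1 ≤ k) (hk2 : k ≤ a + b - 1)
    {h : Fin a × Fin b → ℝ} (hpos : ∀ x, 0 < h x) :
    (∏ x : Fin a × Fin b, if InFile a b k x then bL h x * bR h x else 1)
      = fileProd a b h (k - 1) * fileProd a b h (k + 1) := by
  have hlohi : a - k ≤ min (a - 1) (a + b - 1 - k) := by omega
  -- step: LHS over the file chain
  rw [rep ha hb _ hk2, Finset.prod_mul_distrib]
  -- decompose the bL-product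
  have hL : (∏ i ∈ Finset.Icc (a - k) (min (a - 1) (a + b - 1 - k)),
        bL h (XP ha hb i (i + k - a)))
      = bL h (XP ha hb (a - k) ((a - k) + k - a))
        * ∏ i ∈ Finset.Ico (a - k) (min (a - 1) (a + b - 1 - k)),
            bL h (XP ha hb (i + 1) ((i + 1) + k - a)) := by
    rw [Finset.Icc_eq_cons_Ioc hlohi, Finset.prod_cons, ← himg, Finset.prod_image
      (fun u _ v _ huv => by simpa using huv)]
  have hR : (∏ i ∈ Finset.Icc (a - k) (min (a - 1) (a + b - 1 - k)),
        bR h (XP ha hb i (i + k - a)))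
      = (∏ i ∈ Finset.Ico (a - k) (min (a - 1) (a + b - 1 - k)),
            bR h (XP ha hb i (i + k - a)))
        * bR h (XP ha hb (min (a - 1) (a + b - 1 - k))
            ((min (a - 1) (a + b - 1 - k)) + k - a)) := by
    rw [Finset.Icc_eq_cons_Ico hlohi, Finset.prod_cons]; ring
  -- the pairing identity
  have hpair : ∀ i ∈ Finset.Ico (a - k) (min (a - 1) (a + b - 1 - k)),
      bL h (XP ha hb (i + 1) ((i + 1) + k - a)) * bR h (XP ha hb i (i + k - a))
        = h (XP ha hb (i + 1) (i + k - a)) * h (XP ha hb i (i + k - a + 1)) := by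
    intro i hi
    rw [Finset.mem_Ico] at hi
    have hia : i + 1 < a := by omega
    have hjb : i + k - a + 1 < b := by omega
    have e1 : (i + 1) + k - a = (i + k - a) + 1 := by omega
    rw [XP_congr ha hb rfl e1,
      bL_XP ha hb h hia (by omega), bR_XP ha hb h (by omega) (by omega)]
    rw [if_neg (show ¬(i + 1 = 0 ∧ (i + k - a) + 1 = 0) by omega),
      if_pos (show 0 < i + 1 by omega), if_pos (show 0 < (i + k - a) + 1 by omega),
      if_neg (show ¬(i = a - 1 ∧ i + k - a = b - 1) by omega),
      if_pos hia, if_pos (show (i + k - a) + 1 < b by omega)]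
    simp only [Nat.add_sub_cancel]
    have hu := hpos (XP ha hb (i + 1) (i + k - a))
    have hv := hpos (XP ha hb i (i + k - a + 1))
    field_simp
    try ring
  have hmid : (∏ i ∈ Finset.Ico (a - k) (min (a - 1) (a + b - 1 - k)),
        bL h (XP ha hb (i + 1) ((i + 1) + k - a)))
      * (∏ i ∈ Finset.Ico (a - k) (min (a - 1) (a + b - 1 - k)),
          bR h (XP ha hb i (i + k - a)))
      = (∏ i ∈ Finset.Ico (a - k) (min (a - 1) (a + b - 1 - k)),
          h (XP ha hb (i + 1) (i + k - a)))
        * ∏ i ∈ Finset.Ico (a - k) (min (a - 1) (a + b - 1 - k)),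
            h (XP ha hb i (i + k - a + 1)) := by
    rw [← Finset.prod_mul_distrib, ← Finset.prod_mul_distrib]
    exact Finset.prod_congr rfl hpair
  -- boundary values
  have hBL0 : bL h (XP ha hb (a - k) ((a - k) + k - a))
      = (if k < a then h (XP ha hb (a - k - 1) 0) else 1)
        * (if a < k then h (XP ha hb 0 (k - a - 1)) else 1) := by
    rcases lt_trichotomy k a with hka | hka | hka
    · rw [show (a - k) + k - a = 0 from by omega,
        bL_XP ha hb h (by omega) hb,
        if_neg (show ¬(a - k = 0 ∧ 0 = 0) by omega),
        if_pos (show 0 < a - k by omega), if_neg (show ¬(0:ℕ) < 0 by omega),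
        if_pos hka, if_neg (show ¬ a < k by omega)]
      ring
    · rw [show (a - k) + k - a = 0 from by omega, show a - k = 0 from by omega,
        bL_XP ha hb h ha hb,
        if_pos (show (0:ℕ) = 0 ∧ (0:ℕ) = 0 from ⟨rfl, rfl⟩),
        if_neg (show ¬(0:ℕ) < 0 by omega),
        if_neg (show ¬ k < a by omega), if_neg (show ¬ a < k by omega)]
      norm_num
    · rw [show a - k = 0 from by omega, show 0 + k - a = k - a from by omega,
        bL_XP ha hb h ha (by omega),
        if_neg (show ¬((0:ℕ) = 0 ∧ k - a = 0) by omega),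
        if_neg (show ¬(0:ℕ) < 0 by omega), if_pos (show 0 < k - a by omega),
        if_neg (show ¬ k < a by omega), if_pos hka]
      ring
  have hBR1 : bR h (XP ha hb (min (a - 1) (a + b - 1 - k))
        ((min (a - 1) (a + b - 1 - k)) + k - a))
      = (if k < b then h (XP ha hb (a - 1) k) else 1)
        * (if b < k then h (XP ha hb (a + b - k) (b - 1)) else 1) := by
    rcases lt_trichotomy k b with hkb | hkb | hkb
    · rw [show min (a - 1) (a + b - 1 - k) = a - 1 from by omega,
        show (a - 1) + k - a = k - 1 from by omega,
        bR_XP ha hb h (by omega) (by omega),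
        if_neg (show ¬(a - 1 = a - 1 ∧ k - 1 = b - 1) by omega),
        if_neg (show ¬ (a - 1) + 1 < a by omega),
        if_pos (show (k - 1) + 1 < b by omega),
        show (k - 1) + 1 = k from by omega,
        if_pos hkb, if_neg (show ¬ b < k by omega)]
      rw [zero_add, zero_add, inv_inv, mul_one]
    · rw [show min (a - 1) (a + b - 1 - k) = a - 1 from by omega,
        show (a - 1) + k - a = b - 1 from by omega,
        bR_XP ha hb h (by omega) (by omega),
        if_pos (show a - 1 = a - 1 ∧ b - 1 = b - 1 from ⟨rfl, rfl⟩),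
        if_neg (show ¬ (a - 1) + 1 < a by omega),
        if_neg (show ¬ (b - 1) + 1 < b by omega),
        if_neg (show ¬ k < b by omega), if_neg (show ¬ b < k by omega)]
      norm_num
    · rw [show min (a - 1) (a + b - 1 - k) = a + b - 1 - k from by omega,
        show (a + b - 1 - k) + k - a = b - 1 from by omega,
        bR_XP ha hb h (by omega) (by omega),
        if_neg (show ¬(a + b - 1 - k = a - 1 ∧ b - 1 = b - 1) by omega),
        if_pos (show (a + b - 1 - k) + 1 < a by omega),
        if_neg (show ¬ (b - 1) + 1 < b by omega),
        show (a + b - 1 - k) + 1 = a + b - k from by omega,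
        if_neg (show ¬ k < b by omega), if_pos hkb]
      rw [zero_add, add_zero, inv_inv, one_mul]
  -- the (k-1)-file product
  have hSubL : fileProd a b h (k - 1)
      = (if a < k then h (XP ha hb 0 (k - a - 1)) else 1)
        * (∏ i ∈ Finset.Ico (a - k) (min (a - 1) (a + b - 1 - k)),
            h (XP ha hb (i + 1) (i + k - a)))
        * (if b < k then h (XP ha hb (a + b - k) (b - 1)) else 1) := by
    rw [fileProd_rep ha hb h (show k - 1 ≤ a + b - 1 by omega)]
    by_cases hak : a < k
    · by_cases hbk : b < k
      · rw [if_pos hak, if_pos hbk,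
          show a - (k - 1) = a - k from by omega,
          show min (a - 1) (a + b - 1 - (k - 1)) = (a + b - 1 - k) + 1 from by omega,
          show min (a - 1) (a + b - 1 - k) = a + b - 1 - k from by omega,
          Finset.Icc_eq_cons_Ico (by omega), Finset.prod_cons,
          hIcoIcc, Finset.Icc_eq_cons_Ioc (by omega), Finset.prod_cons,
          ← himg, Finset.prod_image (fun u _ v _ huv => by simpa using huv),
          show ((a + b - 1 - k) + 1) + (k - 1) - a = b - 1 from by omega,
          show (a + b - 1 - k) + 1 = a + b - k from by omega,
          show (a - k) + (k - 1) - a = k - a - 1 from by omega,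
          show a - k = 0 from by omega]
        rw [Finset.prod_congr rfl (fun i hi => show h (XP ha hb (i + 1) ((i + 1) + (k - 1) - a))
            = h (XP ha hb (i + 1) (i + k - a)) from
          congrArg h (XP_congr ha hb rfl (by omega)))]
        ring
      · rw [if_pos hak, if_neg hbk,
          show a - (k - 1) = a - k from by omega,
          show min (a - 1) (a + b - 1 - (k - 1)) = min (a - 1) (a + b - 1 - k) from by omega,
          Finset.Icc_eq_cons_Ioc hlohi, Finset.prod_cons,
          ← himg, Finset.prod_image (fun u _ v _ huv => by simpa using huv),
          show (a - k) + (k - 1) - a = k - a - 1 from by omega,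
          show a - k = 0 from by omega]
        rw [Finset.prod_congr rfl (fun i hi => show h (XP ha hb (i + 1) ((i + 1) + (k - 1) - a))
            = h (XP ha hb (i + 1) (i + k - a)) from
          congrArg h (XP_congr ha hb rfl (by omega)))]
        ring
    · by_cases hbk : b < k
      · rw [if_neg hak, if_pos hbk,
          show a - (k - 1) = (a - k) + 1 from by omega,
          show min (a - 1) (a + b - 1 - (k - 1)) = (a + b - 1 - k) + 1 from by omega,
          show min (a - 1) (a + b - 1 - k) = a + b - 1 - k from by omega,
          Finset.Icc_eq_cons_Ico (by omega), Finset.prod_cons,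
          show Finset.Ico ((a - k) + 1) ((a + b - 1 - k) + 1)
            = Finset.Icc ((a - k) + 1) (a + b - 1 - k) from hIcoIcc _ _,
          hIccIoc, ← himg, Finset.prod_image (fun u _ v _ huv => by simpa using huv),
          show ((a + b - 1 - k) + 1) + (k - 1) - a = b - 1 from by omega,
          show (a + b - 1 - k) + 1 = a + b - k from by omega]
        rw [Finset.prod_congr rfl (fun i hi => show h (XP ha hb (i + 1) ((i + 1) + (k - 1) - a))
            = h (XP ha hb (i + 1) (i + k - a)) from
          congrArg h (XP_congr ha hb rfl (by rw [Finset.mem_Ico] at hi; omega)))]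
        ring
      · rw [if_neg hak, if_neg hbk,
          show a - (k - 1) = (a - k) + 1 from by omega,
          show min (a - 1) (a + b - 1 - (k - 1)) = min (a - 1) (a + b - 1 - k) from by omega,
          hIccIoc, ← himg, Finset.prod_image (fun u _ v _ huv => by simpa using huv)]
        rw [Finset.prod_congr rfl (fun i hi => show h (XP ha hb (i + 1) ((i + 1) + (k - 1) - a))
            = h (XP ha hb (i + 1) (i + k - a)) from
          congrArg h (XP_congr ha hb rfl (by rw [Finset.mem_Ico] at hi; omega)))]
        ring
  -- the (k+1)-file product
  have hSubR : fileProd a b h (k + 1)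
      = (if k < a then h (XP ha hb (a - k - 1) 0) else 1)
        * (∏ i ∈ Finset.Ico (a - k) (min (a - 1) (a + b - 1 - k)),
            h (XP ha hb i (i + k - a + 1)))
        * (if k < b then h (XP ha hb (a - 1) k) else 1) := by
    by_cases htop : k + 1 ≤ a + b - 1
    case neg =>
      have hk' : k = a + b - 1 := by omega
      rw [show k + 1 = a + b from by omega, fileProd_n,
        if_neg (show ¬ k < a by omega), if_neg (show ¬ k < b by omega),
        show min (a - 1) (a + b - 1 - k) = a - k from by omega,
        Finset.Ico_self, Finset.prod_empty]
      norm_num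
    case pos =>
      rw [fileProd_rep ha hb h htop]
      by_cases hka : k < a
      · by_cases hkb : k < b
        · rw [if_pos hka, if_pos hkb,
            show a - (k + 1) = a - k - 1 from by omega,
            show min (a - 1) (a + b - 1 - (k + 1)) = a - 1 from by omega,
            show min (a - 1) (a + b - 1 - k) = a - 1 from by omega,
            Finset.Icc_eq_cons_Ioc (by omega), Finset.prod_cons,
            show Finset.Ioc (a - k - 1) (a - 1) = Finset.Icc (a - k) (a - 1) from by
              rw [← hIccIoc]; exact congrArg₂ _ (by omega) rfl,
            Finset.Icc_eq_cons_Ico (by omega), Finset.prod_cons,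
            show (a - k - 1) + (k + 1) - a = 0 from by omega,
            show (a - 1) + (k + 1) - a = k from by omega]
          rw [Finset.prod_congr rfl (fun i hi => show h (XP ha hb i (i + (k + 1) - a))
              = h (XP ha hb i (i + k - a + 1)) from
            congrArg h (XP_congr ha hb rfl (by rw [Finset.mem_Ico] at hi; omega)))]
          ring
        · rw [if_pos hka, if_neg hkb,
            show a - (k + 1) = a - k - 1 from by omega,
            show min (a - 1) (a + b - 1 - (k + 1)) = a + b - 1 - k - 1 from by omega,
            show min (a - 1) (a + b - 1 - k) = a + b - 1 - k from by omega,
            Finset.Icc_eq_cons_Ioc (by omega), Finset.prod_cons,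
            show Finset.Ioc (a - k - 1) (a + b - 1 - k - 1)
              = Finset.Ico (a - k) (a + b - 1 - k) from by
              rw [← hIccIoc, ← hIcoIcc]; exact congrArg₂ _ (by omega) (by omega),
            show (a - k - 1) + (k + 1) - a = 0 from by omega]
          rw [Finset.prod_congr rfl (fun i hi => show h (XP ha hb i (i + (k + 1) - a))
              = h (XP ha hb i (i + k - a + 1)) from
            congrArg h (XP_congr ha hb rfl (by rw [Finset.mem_Ico] at hi; omega)))]
          ring
      · by_cases hkb : k < b
        · rw [if_neg hka, if_pos hkb,
            show a - (k + 1) = a - k from by omega,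
            show min (a - 1) (a + b - 1 - (k + 1)) = a - 1 from by omega,
            show min (a - 1) (a + b - 1 - k) = a - 1 from by omega,
            Finset.Icc_eq_cons_Ico (by omega), Finset.prod_cons,
            show (a - 1) + (k + 1) - a = k from by omega]
          rw [Finset.prod_congr rfl (fun i hi => show h (XP ha hb i (i + (k + 1) - a))
              = h (XP ha hb i (i + k - a + 1)) from
            congrArg h (XP_congr ha hb rfl (by omega)))]
          ring
        · rw [if_neg hka, if_neg hkb,
            show a - (k + 1) = a - k from by omega,
            show min (a - 1) (a + b - 1 - (k + 1)) = a + b - 1 - k - 1 from by omega,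
            show min (a - 1) (a + b - 1 - k) = a + b - 1 - k from by omega,
            show Finset.Icc (a - k) (a + b - 1 - k - 1)
              = Finset.Ico (a - k) (a + b - 1 - k) from by
              rw [← hIcoIcc]; exact congrArg₂ _ rfl (by omega)]
          rw [Finset.prod_congr rfl (fun i hi => show h (XP ha hb i (i + (k + 1) - a))
              = h (XP ha hb i (i + k - a + 1)) from
            congrArg h (XP_congr ha hb rfl (by omega)))]
          ring
  rw [hL, hR, hBL0, hBR1, hSubL, hSubR]
  linear_combination ((if k < a then h (XP ha hb (a - k - 1) 0) else (1:ℝ))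
    * (if a < k then h (XP ha hb 0 (k - a - 1)) else 1)
    * (if k < b then h (XP ha hb (a - 1) k) else 1)
    * (if b < k then h (XP ha hb (a + b - k) (b - 1)) else 1)) * hmid

end Aux5
section Aux6
set_option linter.unusedSectionVars false
variable {a b : ℕ}

lemma fileProd_toggle_eq (ha : 0 < a) (hb : 0 < b) {k : ℕ} (hk1 : 1 ≤ k)
    (hk2 : k ≤ a + b - 1) {h : Fin a × Fin b → ℝ} (hpos : ∀ x, 0 < h x) :
    fileProd a b (bFileToggle a b k h) k
      = fileProd a b h (k - 1) * fileProd a b h (k + 1) / fileProd a b h k := by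
  have hfk : fileProd a b h k ≠ 0 := (fileProd_pos hpos k).ne'
  rw [eq_div_iff hfk]
  have key : ∀ x : Fin a × Fin b,
      (if InFile a b k x then bFileToggle a b k h x else 1)
        * (if InFile a b k x then h x else 1)
      = (if InFile a b k x then bL h x * bR h x else 1) := by
    intro x
    by_cases hx : InFile a b k x
    · rw [if_pos hx, if_pos hx, if_pos hx]
      show (if InFile a b k x then bL h x * bR h x / h x else h x) * h x = _
      rw [if_pos hx, div_mul_cancel₀ _ (hpos x).ne']
    · rw [if_neg hx, if_neg hx, if_neg hx]; ring
  show (∏ x : Fin a × Fin b, if InFile a b k x then bFileToggle a b k h x else 1)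
      * (∏ x : Fin a × Fin b, if InFile a b k x then h x else 1) = _
  rw [← Finset.prod_mul_distrib, Finset.prod_congr rfl (fun x _ => key x)]
  exact master ha hb hk1 hk2 hpos

lemma promo_invariant (ha : 0 < a) (hb : 0 < b) (f : Fin a × Fin b → ℝ)
    (hf : ∀ x, 0 < f x) :
    ∀ t, t ≤ a + b - 1 →
      (∀ x, 0 < (List.range t).foldl (fun g k => bFileToggle a b (k + 1) g) f x)
      ∧ (∀ m, m ≤ t →
          fileProd a b ((List.range t).foldl (fun g k => bFileToggle a b (k + 1) g) f) m
            = fileProd a b f (m + 1) / fileProd a b f 1)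
      ∧ (∀ m, t < m →
          fileProd a b ((List.range t).foldl (fun g k => bFileToggle a b (k + 1) g) f) m
            = fileProd a b f m) := by
  intro t
  induction t with
  | zero =>
    intro _
    refine ⟨by simpa using hf, ?_, ?_⟩
    · intro m hm
      obtain rfl : m = 0 := by omega
      simp only [List.range_zero, List.foldl_nil]
      rw [fileProd_zero, zero_add, div_self (fileProd_pos hf 1).ne']
    · intro m _
      simp [List.range_zero, List.foldl_nil]
  | succ t ih =>
    intro ht
    obtain ⟨hpos, hle, hgt⟩ := ih (by omega)
    have hfold : (List.range (t + 1)).foldl (fun g k => bFileToggle a b (k + 1) g) f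
        = bFileToggle a b (t + 1)
            ((List.range t).foldl (fun g k => bFileToggle a b (k + 1) g) f) := by
      rw [List.range_succ, List.foldl_append, List.foldl_cons, List.foldl_nil]
    refine ⟨?_, ?_, ?_⟩
    · rw [hfold]; exact toggle_pos ha hb hpos
    · intro m hm
      rw [hfold]
      rcases Nat.lt_or_ge m (t + 1) with hmt | hmt
      · rw [fileProd_toggle_ne (by omega), hle m (by omega)]
      · obtain rfl : m = t + 1 := by omega
        rw [fileProd_toggle_eq ha hb (by omega) (by omega) hpos]
        simp only [Nat.add_sub_cancel]
        rw [hle t le_rfl, hgt (t + 1) (by omega), hgt (t + 1 + 1) (by omega)]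
        have h1 : fileProd a b f (t + 1) ≠ 0 := (fileProd_pos hf _).ne'
        have h2 : fileProd a b f 1 ≠ 0 := (fileProd_pos hf _).ne'
        field_simp
    · intro m hm
      rw [hfold, fileProd_toggle_ne (by omega), hgt m (by omega)]

end Aux6
/-- Birational promotion cyclically shifts the quotient sequence leftward:
if `Q(f) = (q_1, …, q_n)` then `Q(π_B f) = (q_2, …, q_n, q_1)`. -/
theorem stmt10 (a b : ℕ) (ha : 1 ≤ a) (hb : 1 ≤ b)
    (f : Fin a × Fin b → ℝ) (hf : ∀ x, 0 < f x) :
    ∀ m, 1 ≤ m → m ≤ a + b →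
      quotSeq a b (bPromo a b f) m =
        if m = a + b then quotSeq a b f 1 else quotSeq a b f (m + 1) := by
  intro m hm1 hm2
  obtain ⟨hpos, hle, hgt⟩ := promo_invariant ha hb f hf (a + b - 1) le_rfl
  have hle' : ∀ m, m ≤ a + b - 1 → fileProd a b (bPromo a b f) m
      = fileProd a b f (m + 1) / fileProd a b f 1 := hle
  have hgt' : ∀ m, a + b - 1 < m → fileProd a b (bPromo a b f) m = fileProd a b f m := hgt
  unfold quotSeq
  by_cases hm : m = a + b
  · rw [if_pos hm, hm]
    have e1 : fileProd a b (bPromo a b f) (a + b) = fileProd a b f (a + b) :=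
      hgt' _ (by omega)
    have e2 : fileProd a b (bPromo a b f) (a + b - 1)
        = fileProd a b f (a + b - 1 + 1) / fileProd a b f 1 := hle' _ le_rfl
    rw [show a + b - 1 + 1 = a + b from by omega, fileProd_n] at e2
    rw [e1, e2, fileProd_n, fileProd_zero, div_one, one_div_one_div]
  · rw [if_neg hm]
    have e1 : fileProd a b (bPromo a b f) m = fileProd a b f (m + 1) / fileProd a b f 1 :=
      hle' m (by omega)
    have e2 : fileProd a b (bPromo a b f) (m - 1)
        = fileProd a b f (m - 1 + 1) / fileProd a b f 1 := hle' (m - 1) (by omega)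
    rw [e1, e2, show m - 1 + 1 = m from by omega, show m + 1 - 1 = m from by omega]
    have h1 : fileProd a b f 1 ≠ 0 := (fileProd_pos hf _).ne'
    have h2 : fileProd a b f m ≠ 0 := (fileProd_pos hf _).ne'
    field_simp

end
end

section
/- Piecewise-linear rowmotion restricted to the vertices of the order polytope recovers combinatorial rowmotion: let P be a finite poset, let I be an order ideal of P, and let f ∈ O(P) be the indicator function of the filter P∖I (so f(x) = 1 if x ∉ I and f(x) = 0 if x ∈ I). Then ρ_P(f) is the indicator function of the filter P∖ρ(I), where ρ(I) is the down-closure of the set of minimal elements of P∖I. -/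
open scoped Classical

noncomputable section

variable {P : Type*} [Fintype P] [PartialOrder P]

/-- `I` is an order ideal (downset). -/
def IsOrderIdeal {Q : Type*} [PartialOrder Q] (I : Set Q) : Prop :=
  ∀ ⦃x⦄, x ∈ I → ∀ ⦃y⦄, y ≤ x → y ∈ I

/-- Combinatorial rowmotion: `ρ(I)` is the down-closure of the set of minimal elements of the
complementary filter `P ∖ I`. -/
def combRow {Q : Type*} [PartialOrder Q] (I : Set Q) : Set Q :=
  {y | ∃ x, x ∉ I ∧ (∀ z, z ∉ I → z ≤ x → z = x) ∧ y ≤ x}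

section AuxProof

lemma sSup01 {S : Set ℝ} (h : ∀ a ∈ S, a = 0 ∨ a = 1) :
    sSup S = if 1 ∈ S then 1 else 0 := by
  split_ifs with h1
  · refine le_antisymm (csSup_le ⟨1, h1⟩ fun a ha => ?_) (le_csSup ⟨1, fun a ha => ?_⟩ h1)
    · rcases h a ha with rfl | rfl <;> norm_num
    · rcases h a ha with rfl | rfl <;> norm_num
  · rcases Set.eq_empty_or_nonempty S with rfl | hne
    · exact Real.sSup_empty
    · obtain ⟨a, ha⟩ := hne
      have h0 : ∀ b ∈ S, b = 0 := fun b hb =>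
        (h b hb).resolve_right (fun e => h1 (e ▸ hb))
      have ha0 : (0 : ℝ) ∈ S := by have := h0 a ha; rwa [this] at ha
      refine le_antisymm (csSup_le ⟨a, ha⟩ fun b hb => (h0 b hb).le)
        (le_csSup ⟨1, fun b hb => ?_⟩ ha0)
      rcases h b hb with rfl | rfl <;> norm_num

lemma sInf01 {S : Set ℝ} (hne : S.Nonempty) (h : ∀ a ∈ S, a = 0 ∨ a = 1) :
    sInf S = if 0 ∈ S then 0 else 1 := by
  split_ifs with h0
  · refine le_antisymm (csInf_le ⟨0, fun a ha => ?_⟩ h0) (le_csInf ⟨0, h0⟩ fun a ha => ?_)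
    · rcases h a ha with rfl | rfl <;> norm_num
    · rcases h a ha with rfl | rfl <;> norm_num
  · obtain ⟨a, ha⟩ := hne
    have h1 : ∀ b ∈ S, b = 1 := fun b hb =>
      (h b hb).resolve_left (fun e => h0 (e ▸ hb))
    have ha1 : (1 : ℝ) ∈ S := by have := h1 a ha; rwa [this] at ha
    refine le_antisymm (csInf_le ⟨0, fun b hb => ?_⟩ ha1)
      (le_csInf ⟨a, ha⟩ fun b hb => (h1 b hb).ge)
    rcases h b hb with rfl | rfl <;> norm_num

variable {P : Type*} [Fintype P] [PartialOrder P]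

lemma emb_covBy_emb {x y : P} (h : y ⋖ x) : emb y ⋖ emb x :=
  WithBot.coe_covBy_coe.2 (WithTop.coe_covBy_coe.2 h)

lemma extendHat_emb_s17 (v0 v1 : ℝ) (f : P → ℝ) (y : P) :
    extendHat v0 v1 f (emb y) = f y := rfl

lemma plL_eq (J : Set P) (x : P) :
    plL (fun y => if y ∈ J then (0 : ℝ) else 1) x
      = if ∃ y, y ⋖ x ∧ y ∉ J then 1 else 0 := by
  set f : P → ℝ := fun y => if y ∈ J then (0 : ℝ) else 1 with hf
  have hvals : ∀ a ∈ extendHat 0 1 f '' {y | y ⋖ emb x}, a = 0 ∨ a = 1 := by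
    rintro a ⟨y, -, rfl⟩
    induction y using WithBot.recBotCoe with
    | bot => left; rfl
    | coe t =>
      induction t using WithTop.recTopCoe with
      | top => right; rfl
      | coe y' =>
        simp only [extendHat, WithBot.recBotCoe_coe, WithTop.recTopCoe_coe, hf]
        split_ifs <;> simp
  have hmem : (1 : ℝ) ∈ extendHat 0 1 f '' {y | y ⋖ emb x}
      ↔ ∃ y, y ⋖ x ∧ y ∉ J := by
    constructor
    · rintro ⟨y, hy, hv⟩
      have hy' : y ⋖ emb x := hy
      induction y using WithBot.recBotCoe with
      | bot => norm_num [extendHat] at hv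
      | coe t =>
        induction t using WithTop.recTopCoe with
        | top =>
          exact absurd (WithBot.coe_lt_coe.1 hy'.lt) not_top_lt
        | coe y' =>
          refine ⟨y', WithTop.coe_covBy_coe.1 (WithBot.coe_covBy_coe.1 hy'), ?_⟩
          intro hmem'
          simp only [extendHat, WithBot.recBotCoe_coe, WithTop.recTopCoe_coe, hf,
            if_pos hmem'] at hv
          norm_num at hv
    · rintro ⟨y, hyx, hyJ⟩
      refine ⟨emb y, emb_covBy_emb hyx, ?_⟩
      simp only [extendHat_emb_s17, hf, if_neg hyJ]
  rw [plL, sSup01 hvals]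
  exact if_congr hmem rfl rfl

lemma plR_eq (J : Set P) (x : P) :
    plR (fun y => if y ∈ J then (0 : ℝ) else 1) x
      = if ∃ z, x ⋖ z ∧ z ∈ J then 0 else 1 := by
  set f : P → ℝ := fun y => if y ∈ J then (0 : ℝ) else 1 with hf
  have hne : ({y | emb x ⋖ y} : Set (WithBot (WithTop P))).Nonempty := by
    by_cases hmax : IsMax x
    · exact ⟨((⊤ : WithTop P) : WithBot (WithTop P)),
        WithBot.coe_covBy_coe.2 (WithTop.coe_covBy_top.2 hmax)⟩
    · obtain ⟨z, hz⟩ := not_isMax_iff.1 hmax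
      obtain ⟨c, hc, -⟩ := exists_covBy_le_of_lt hz
      exact ⟨emb c, emb_covBy_emb hc⟩
  have hvals : ∀ a ∈ extendHat 0 1 f '' {y | emb x ⋖ y}, a = 0 ∨ a = 1 := by
    rintro a ⟨y, -, rfl⟩
    induction y using WithBot.recBotCoe with
    | bot => left; rfl
    | coe t =>
      induction t using WithTop.recTopCoe with
      | top => right; rfl
      | coe y' =>
        simp only [extendHat, WithBot.recBotCoe_coe, WithTop.recTopCoe_coe, hf]
        split_ifs <;> simp
  have hmem : (0 : ℝ) ∈ extendHat 0 1 f '' {y | emb x ⋖ y}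
      ↔ ∃ z, x ⋖ z ∧ z ∈ J := by
    constructor
    · rintro ⟨y, hy, hv⟩
      have hy' : emb x ⋖ y := hy
      induction y using WithBot.recBotCoe with
      | bot => exact absurd hy'.lt (by simp [emb])
      | coe t =>
        induction t using WithTop.recTopCoe with
        | top =>
          have hv' : (1 : ℝ) = 0 := hv
          norm_num at hv'
        | coe z =>
          refine ⟨z, WithTop.coe_covBy_coe.1 (WithBot.coe_covBy_coe.1 hy'), ?_⟩
          by_contra hmem'
          simp only [extendHat, WithBot.recBotCoe_coe, WithTop.recTopCoe_coe, hf,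
            if_neg hmem'] at hv
          norm_num at hv
    · rintro ⟨z, hxz, hzJ⟩
      refine ⟨emb z, emb_covBy_emb hxz, ?_⟩
      simp only [extendHat_emb_s17, hf, if_pos hzJ]
  rw [plR, sInf01 (hne.image _) hvals]
  exact if_congr hmem rfl rfl

lemma combRow_downclosed {I : Set P} {x y : P} (hx : x ∈ combRow I) (hyx : y ≤ x) :
    y ∈ combRow I := by
  obtain ⟨m, h1, h2, h3⟩ := hx; exact ⟨m, h1, h2, hyx.trans h3⟩

lemma mem_combRow_iff_of_mem {I : Set P} (hI : IsOrderIdeal I) {x : P} (hx : x ∈ I) :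
    x ∈ combRow I ↔ ∃ z, x ⋖ z ∧ z ∈ combRow I := by
  constructor
  · rintro ⟨m, hmI, hmin, hxm⟩
    have hlt : x < m := lt_of_le_of_ne hxm (by rintro rfl; exact hmI hx)
    obtain ⟨c, hc, hcm⟩ := exists_covBy_le_of_lt hlt
    exact ⟨c, hc, m, hmI, hmin, hcm⟩
  · rintro ⟨z, hz, hzρ⟩
    exact combRow_downclosed hzρ hz.le

lemma mem_combRow_iff_of_not_mem {I : Set P} (hI : IsOrderIdeal I) {x : P} (hx : x ∉ I) :
    x ∈ combRow I ↔ ∀ y, y ⋖ x → y ∈ I := by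
  constructor
  · rintro ⟨m, hmI, hmin, hxm⟩ y hyx
    have hxe : x = m := hmin x hx hxm
    by_contra hyI
    have hye : y = m := hmin y hyI (hyx.le.trans hxm)
    exact hyx.ne (hye.trans hxe.symm)
  · intro h
    refine ⟨x, hx, ?_, le_rfl⟩
    intro z hzI hzx
    by_contra hne
    obtain ⟨c, hzc, hc⟩ := exists_le_covBy_of_lt (lt_of_le_of_ne hzx hne)
    exact hzI (hI (h c hc) hzc)

lemma cover_not_combRow {I : Set P} {x z : P} (hx : x ∉ I) (hxz : x < z) :
    z ∉ combRow I := by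
  rintro ⟨m, hmI, hmin, hzm⟩
  exact (hxz.trans_le hzm).ne (hmin x hx ((hxz.le).trans hzm))

/-- The hybrid ideal: agrees with `combRow I` on the elements of `xs` (already toggled)
and with `I` elsewhere. -/
def JSet (I : Set P) (xs : List P) : Set P :=
  (I \ {a | a ∈ xs}) ∪ (combRow I ∩ {a | a ∈ xs})

lemma plRow_aux {I : Set P} (hI : IsOrderIdeal I) :
    ∀ xs : List P, xs.Nodup → xs.Pairwise (fun u v => ¬ v < u) →
      (∀ x ∈ xs, ∀ z, x < z → z ∈ xs) →
      plRow xs (fun x => if x ∈ I then (0 : ℝ) else 1) =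
        fun x => if x ∈ JSet I xs then 0 else 1 := by
  intro xs
  induction xs with
  | nil =>
    intro _ _ _
    funext x
    simp [plRow, JSet]
  | cons x rest ih =>
    intro hnd hpw hup
    have hxrest : x ∉ rest := (List.nodup_cons.1 hnd).1
    have hpx : ∀ v ∈ rest, ¬ v < x := fun v hv => (List.pairwise_cons.1 hpw).1 v hv
    have hup' : ∀ x' ∈ rest, ∀ z, x' < z → z ∈ rest := by
      intro x' hx' z hz
      rcases List.mem_cons.1 (hup x' (List.mem_cons_of_mem _ hx') z hz) with rfl | h
      · exact absurd hz (hpx x' hx')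
      · exact h
    have hIH := ih hnd.of_cons hpw.of_cons hup'
    show plToggle x (plRow rest _) = _
    rw [hIH]
    set J : Set P := JSet I rest with hJdef
    have hJ : J = (I \ {a | a ∈ rest}) ∪ (combRow I ∩ {a | a ∈ rest}) := rfl
    have hxJ : x ∈ J ↔ x ∈ I := by rw [hJ]; simp [hxrest]
    have hcovbelow : ∀ y : P, y ⋖ x → (y ∈ J ↔ y ∈ I) := by
      intro y hy
      have hyT : y ∉ rest := fun h => hpx y h hy.lt
      rw [hJ]; simp [hyT]
    have hcovabove : ∀ z : P, x ⋖ z → (z ∈ J ↔ z ∈ combRow I) := by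
      intro z hz
      have hzT : z ∈ rest := by
        rcases List.mem_cons.1 (hup x List.mem_cons_self z hz.lt) with rfl | h
        · exact absurd hz.lt (lt_irrefl _)
        · exact h
      rw [hJ]; simp [hzT]
    funext x'
    by_cases hx' : x' = x
    · subst hx'
      simp only [plToggle, Function.update_self]
      rw [plL_eq J x', plR_eq J x']
      have e1 : (∃ y, y ⋖ x' ∧ y ∉ J) ↔ (∃ y, y ⋖ x' ∧ y ∉ I) :=
        exists_congr fun y => and_congr_right fun hy => not_congr (hcovbelow y hy)
      have e2 : (∃ z, x' ⋖ z ∧ z ∈ J) ↔ (∃ z, x' ⋖ z ∧ z ∈ combRow I) :=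
        exists_congr fun z => and_congr_right fun hz => hcovabove z hz
      have e3 : x' ∈ JSet I (x' :: rest) ↔ x' ∈ combRow I := by simp [JSet]
      rw [if_congr e1 rfl rfl, if_congr e2 rfl rfl, if_congr hxJ rfl rfl,
        if_congr e3 rfl rfl]
      by_cases hxI : x' ∈ I
      · have L0 : ¬ ∃ y, y ⋖ x' ∧ y ∉ I := by
          rintro ⟨y, hy, hyI⟩; exact hyI (hI hxI hy.le)
        rw [if_neg L0, if_pos hxI]
        have e4 : (∃ z, x' ⋖ z ∧ z ∈ combRow I) ↔ x' ∈ combRow I :=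
          (mem_combRow_iff_of_mem hI hxI).symm
        rw [if_congr e4 rfl rfl]
        split_ifs <;> ring
      · have R1 : ¬ ∃ z, x' ⋖ z ∧ z ∈ combRow I := by
          rintro ⟨z, hz, hzρ⟩; exact cover_not_combRow hxI hz.lt hzρ
        rw [if_neg R1, if_neg hxI]
        by_cases hρ : x' ∈ combRow I
        · have hL : ¬ ∃ y, y ⋖ x' ∧ y ∉ I := by
            rintro ⟨y, hy, hyI⟩
            exact hyI ((mem_combRow_iff_of_not_mem hI hxI).1 hρ y hy)
          rw [if_neg hL, if_pos hρ]; ring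
        · have hL : ∃ y, y ⋖ x' ∧ y ∉ I := by
            by_contra hcon
            push_neg at hcon
            exact hρ ((mem_combRow_iff_of_not_mem hI hxI).2 fun y hy => hcon y hy)
          rw [if_pos hL, if_neg hρ]; ring
    · simp only [plToggle]
      rw [Function.update_of_ne hx']
      have e : x' ∈ JSet I (x :: rest) ↔ x' ∈ J := by
        rw [hJ]; simp [JSet, List.mem_cons, hx']
      exact (if_congr e.symm rfl rfl)

end AuxProof

/-- Piecewise-linear rowmotion restricted to the vertices of the order polytope recovers
combinatorial rowmotion: on the indicator function of the filter `P ∖ I` it produces the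
indicator function of the filter `P ∖ ρ(I)`. -/
theorem stmt17 {P : Type*} [Fintype P] [PartialOrder P]
    (xs : List P) (hxs : IsLinearExt xs)
    (I : Set P) (hI : IsOrderIdeal I) :
    plRow xs (fun x => if x ∈ I then 0 else 1) =
      fun x => if x ∈ combRow I then (0 : ℝ) else 1 := by
  obtain ⟨hnd, hall, hpw⟩ := hxs
  rw [plRow_aux hI xs hnd hpw (fun x _ z _ => hall z)]
  funext x
  have hx : x ∈ xs := hall x
  simp [JSet, hx]

end
end
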